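/- Let $k\ge 1$ and $n\ge 1$ be integers, and write $k=qn+r$ with integers $q\ge 0$ and $r\in\{1,\dots,n\}$. For an ellipsoid $E(a_1,\dots,a_n)$ with $0<a_1\le\dots\le a_n$, define $c_k(E(\bm a))$ as the $k$-th smallest element (with multiplicity) of the multiset of all positive integer multiples of the $a_j$'s. Then the maximum of the ratio $c_k(E(\bm a))/(a_1\cdots a_n)^{1/n}$ over all such tuples $\bm a$ equals $(q+1)^{(n-r+1)/n}(q+2)^{(r-1)/n}$. -/

import Mathlib

/-- `ckE a k` : the `k`-th smallest element (with multiplicity) of the multiset of all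
positive integer multiples of the entries of `a`; i.e. the `k`-th Ekeland–Hofer capacity of
the ellipsoid `E(a)`. -/
noncomputable def ckE {n : ℕ} (a : Fin n → ℝ) (k : ℕ) : ℝ :=
  sInf {c : ℝ | k ≤ {p : ℕ × Fin n | 1 ≤ p.1 ∧ (p.1 : ℝ) * a p.2 ≤ c}.ncard}

lemma count_eq {n : ℕ} (a : Fin n → ℝ) (ha : ∀ i, 0 < a i) (c : ℝ) :
    {p : ℕ × Fin n | 1 ≤ p.1 ∧ (p.1 : ℝ) * a p.2 ≤ c}.ncard = ∑ i, ⌊c / a i⌋₊ := by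
  classical
  set F : Finset (ℕ × Fin n) :=
    Finset.univ.biUnion (fun i => (Finset.Icc 1 ⌊c / a i⌋₊).image (fun m => (m, i))) with hF
  have hmem : ∀ p : ℕ × Fin n, p ∈ F ↔ (1 ≤ p.1 ∧ (p.1 : ℝ) * a p.2 ≤ c) := by
    intro p
    rw [hF, Finset.mem_biUnion]
    constructor
    · rintro ⟨i, -, hp⟩
      rw [Finset.mem_image] at hp
      obtain ⟨m, hm, rfl⟩ := hp
      rw [Finset.mem_Icc] at hm
      refine ⟨hm.1, ?_⟩
      have := hm.2
      rw [Nat.le_floor_iff' (by omega), le_div_iff₀ (ha i)] at this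
      exact this
    · rintro ⟨h1, h2⟩
      refine ⟨p.2, Finset.mem_univ _, ?_⟩
      rw [Finset.mem_image]
      refine ⟨p.1, ?_, rfl⟩
      rw [Finset.mem_Icc]
      exact ⟨h1, by rw [Nat.le_floor_iff' (by omega), le_div_iff₀ (ha p.2)]; exact h2⟩
  have hset : {p : ℕ × Fin n | 1 ≤ p.1 ∧ (p.1 : ℝ) * a p.2 ≤ c} = ↑F := by
    ext p; rw [Finset.mem_coe, hmem]; rfl
  rw [hset, Set.ncard_coe_finset, hF, Finset.card_biUnion]
  · refine Finset.sum_congr rfl fun i _ => ?_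
    rw [Finset.card_image_of_injective _ (fun x y hxy => (Prod.mk.injEq _ _ _ _ ▸ hxy).1),
      Nat.card_Icc]
    omega
  · intro x _ y _ hxy
    simp only [Finset.disjoint_left, Finset.mem_image, Finset.mem_Icc]
    rintro p ⟨m, _, rfl⟩ ⟨m', _, hm'⟩
    exact hxy ((Prod.mk.injEq _ _ _ _ ▸ hm').2.symm ▸ rfl)

lemma ckE_eq {n : ℕ} (a : Fin n → ℝ) (ha : ∀ i, 0 < a i) (k : ℕ) :
    ckE a k = sInf {c : ℝ | k ≤ ∑ i, ⌊c / a i⌋₊} := by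
  unfold ckE
  congr 1
  ext c
  rw [Set.mem_setOf_eq, Set.mem_setOf_eq, count_eq a ha c]

lemma nat1 (q : ℕ) : ∀ d m : ℕ, m + d = q → (m + 1) * (q + 2) ^ d ≤ (q + 1) ^ (d + 1) := by
  intro d
  induction d with
  | zero => intro m hm; subst hm; simp
  | succ d ih =>
    intro m hm
    have ih' := ih (m + 1) (by omega)
    have h1 : (q + 1) ^ (d + 1) ≤ (q + 2) ^ (d + 1) := Nat.pow_le_pow_left (by omega) _
    have key : (m + 1) * (q + 2) ^ (d + 1) + (q + 2) ^ (d + 1)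
        ≤ (q + 1) ^ (d + 2) + (q + 2) ^ (d + 1) := by
      calc (m + 1) * (q + 2) ^ (d + 1) + (q + 2) ^ (d + 1)
          = ((m + 1 + 1) * (q + 2) ^ d) * (q + 2) := by ring
        _ ≤ (q + 1) ^ (d + 1) * (q + 2) := Nat.mul_le_mul_right _ ih'
        _ = (q + 1) ^ (d + 2) + (q + 1) ^ (d + 1) := by ring
        _ ≤ (q + 1) ^ (d + 2) + (q + 2) ^ (d + 1) := by omega
    have h2 : (d + 1) + 1 = d + 2 := rfl
    rw [h2]
    omega

lemma nat2 (q : ℕ) : ∀ e : ℕ, (q + 2 + e) * (q + 1) ^ e ≤ (q + 2) ^ (e + 1) := by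
  intro e
  induction e with
  | zero => simp
  | succ e ih =>
    have h1 : (q + 1) ^ (e + 1) ≤ (q + 2) ^ (e + 1) := Nat.pow_le_pow_left (by omega) _
    calc (q + 2 + (e + 1)) * (q + 1) ^ (e + 1)
        = (q + 2 + e) * (q + 1) ^ e * (q + 1) + (q + 1) ^ (e + 1) := by ring
      _ ≤ (q + 2) ^ (e + 1) * (q + 1) + (q + 2) ^ (e + 1) :=
          Nat.add_le_add (Nat.mul_le_mul_right _ ih) h1
      _ = (q + 2) ^ (e + 2) := by ring

lemma key_ineq (q m : ℕ) :
    (m : ℝ) + 1 ≤ ((q : ℝ) + 1) * (((q : ℝ) + 2) / ((q : ℝ) + 1)) ^ ((m : ℝ) - (q : ℝ)) := by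
  have hA : (0 : ℝ) < (q : ℝ) + 1 := by positivity
  have ht : (0 : ℝ) < ((q : ℝ) + 2) / ((q : ℝ) + 1) := by positivity
  rcases le_or_gt m q with hmq | hmq
  · set d : ℕ := q - m with hd
    have hexp : (m : ℝ) - (q : ℝ) = -(d : ℝ) := by
      rw [hd]; push_cast [Nat.cast_sub hmq]; ring
    rw [hexp, Real.rpow_neg ht.le, Real.rpow_natCast, div_pow, inv_div, mul_div_assoc',
      le_div_iff₀ (by positivity)]
    have hnat := nat1 q d m (by omega)
    have hcast : ((m : ℝ) + 1) * ((q : ℝ) + 2) ^ d ≤ ((q : ℝ) + 1) ^ (d + 1) := by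
      have := (Nat.cast_le (α := ℝ)).2 hnat
      push_cast at this
      convert this using 2 <;> ring
    calc ((m : ℝ) + 1) * ((q : ℝ) + 2) ^ d ≤ ((q : ℝ) + 1) ^ (d + 1) := hcast
      _ = ((q : ℝ) + 1) * ((q : ℝ) + 1) ^ d := by ring
  · obtain ⟨e, rfl⟩ : ∃ e, m = q + 1 + e := ⟨m - q - 1, by omega⟩
    have hexp : ((q + 1 + e : ℕ) : ℝ) - (q : ℝ) = ((e + 1 : ℕ) : ℝ) := by push_cast; ring
    rw [hexp, Real.rpow_natCast, div_pow, mul_div_assoc', le_div_iff₀ (by positivity)]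
    have hnat := nat2 q e
    have hcast : ((q : ℝ) + 2 + e) * ((q : ℝ) + 1) ^ e ≤ ((q : ℝ) + 2) ^ (e + 1) := by
      have := (Nat.cast_le (α := ℝ)).2 hnat
      push_cast at this
      convert this using 2 <;> ring
    calc (((q + 1 + e : ℕ) : ℝ) + 1) * ((q : ℝ) + 1) ^ (e + 1)
        = (((q : ℝ) + 2 + e) * ((q : ℝ) + 1) ^ e) * ((q : ℝ) + 1) := by push_cast; ring
      _ ≤ ((q : ℝ) + 2) ^ (e + 1) * ((q : ℝ) + 1) :=
          mul_le_mul_of_nonneg_right hcast hA.le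
      _ = ((q : ℝ) + 1) * ((q : ℝ) + 2) ^ (e + 1) := by ring

lemma prod_rpow_sum {ι : Type*} (t : ℝ) (ht : 0 < t) (s : Finset ι) (f : ι → ℝ) :
    ∏ i ∈ s, t ^ f i = t ^ (∑ i ∈ s, f i) := by
  classical
  induction s using Finset.cons_induction with
  | empty => simp
  | cons a s ha ih => rw [Finset.prod_cons, Finset.sum_cons, ih, Real.rpow_add ht]

lemma card_filter_lt (n m : ℕ) (h : m < n) :
    (Finset.univ.filter (fun i : Fin n => (i : ℕ) < m)).card = m := by
  have : (Finset.univ.filter (fun i : Fin n => (i : ℕ) < m)) = Finset.Iio (⟨m, h⟩ : Fin n) := by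
    ext i; simp [Fin.lt_def]
  rw [this, Fin.card_Iio]


/-- The global maximum of the `k`-th capacity ratio over `2n`-dimensional ellipsoids is
`(q+1)^{(n-r+1)/n} (q+2)^{(r-1)/n}`, where `k = qn + r`, `q ≥ 0`, `1 ≤ r ≤ n`. -/
theorem stmt1 (n k q r : ℕ) (hn : 1 ≤ n) (hk : 1 ≤ k) (hr1 : 1 ≤ r) (hrn : r ≤ n)
    (hqr : k = q * n + r) :
    IsGreatest
      {x : ℝ | ∃ a : Fin n → ℝ, (∀ i, 0 < a i) ∧ Monotone a ∧
        x = ckE a k / (∏ i, a i) ^ ((1:ℝ)/(n:ℝ))}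
      (((q : ℝ) + 1) ^ (((n : ℝ) - (r : ℝ) + 1)/(n : ℝ)) *
        ((q : ℝ) + 2) ^ (((r : ℝ) - 1)/(n : ℝ))) := by
  classical
  have hn0 : (n : ℝ) ≠ 0 := Nat.cast_ne_zero.2 (by omega)
  set A : ℝ := (q : ℝ) + 1 with hAdef
  set B : ℝ := (q : ℝ) + 2 with hBdef
  have hA : (0 : ℝ) < A := by rw [hAdef]; positivity
  have hB : (0 : ℝ) < B := by rw [hBdef]; positivity
  have hAB : A ≤ B := by rw [hAdef, hBdef]; linarith
  set M : ℝ := A ^ (((n : ℝ) - (r : ℝ) + 1)/(n : ℝ)) * B ^ (((r : ℝ) - 1)/(n : ℝ)) with hMdef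
  have hM : 0 < M := by
    rw [hMdef]
    exact mul_pos (Real.rpow_pos_of_pos hA _) (Real.rpow_pos_of_pos hB _)
  have e1 : ((n - r + 1 : ℕ) : ℝ) = (n : ℝ) - (r : ℝ) + 1 := by
    push_cast [Nat.cast_sub hrn]; ring
  have e2 : ((r - 1 : ℕ) : ℝ) = (r : ℝ) - 1 := by
    push_cast [Nat.cast_sub hr1]; ring
  have hMpow : M ^ (n : ℕ) = A ^ (n - r + 1) * B ^ (r - 1) := by
    rw [hMdef, mul_pow, ← Real.rpow_natCast (A ^ (((n : ℝ) - (r : ℝ) + 1)/(n : ℝ))) n,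
      ← Real.rpow_natCast (B ^ (((r : ℝ) - 1)/(n : ℝ))) n,
      ← Real.rpow_mul hA.le, ← Real.rpow_mul hB.le,
      div_mul_cancel₀ _ hn0, div_mul_cancel₀ _ hn0, ← e1, ← e2,
      Real.rpow_natCast, Real.rpow_natCast]
  have hrn' : r - 1 < n := by omega
  have hc1 : (Finset.univ.filter fun i : Fin n => (i : ℕ) < r - 1).card = r - 1 :=
    card_filter_lt n (r - 1) hrn'
  have hc2 : (Finset.univ.filter fun i : Fin n => ¬((i : ℕ) < r - 1)).card = n - (r - 1) := by
    have h := Finset.card_filter_add_card_filter_not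
      (s := (Finset.univ : Finset (Fin n))) (p := fun i : Fin n => (i : ℕ) < r - 1)
    rw [Finset.card_univ, Fintype.card_fin] at h
    omega
  constructor
  · -- membership : the extremal ellipsoid
    set a : Fin n → ℝ := fun i => if (i : ℕ) < r - 1 then B⁻¹ else A⁻¹ with hadef
    have hpos : ∀ i, 0 < a i := by
      intro i; rw [hadef]; dsimp only
      split_ifs
      · exact inv_pos.2 hB
      · exact inv_pos.2 hA
    refine ⟨a, hpos, ?_, ?_⟩
    · -- monotone
      intro i j hij
      rw [hadef]; dsimp only
      have hij' : (i : ℕ) ≤ (j : ℕ) := hij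
      split_ifs with h1 h2 h2
      · exact le_refl _
      · exact inv_anti₀ hA hAB
      · omega
      · exact le_refl _
    · -- value of the ratio
      have hNc : ∀ c : ℝ, ∑ i, ⌊c / a i⌋₊
          = (r - 1) * ⌊c * B⌋₊ + (n - (r - 1)) * ⌊c * A⌋₊ := by
        intro c
        calc ∑ i, ⌊c / a i⌋₊
            = ∑ i : Fin n, (if (i : ℕ) < r - 1 then ⌊c * B⌋₊ else ⌊c * A⌋₊) := by
              refine Finset.sum_congr rfl fun i _ => ?_
              rw [hadef]; dsimp only
              split_ifs <;> rw [div_eq_mul_inv, inv_inv]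
          _ = (r - 1) * ⌊c * B⌋₊ + (n - (r - 1)) * ⌊c * A⌋₊ := by
              rw [Finset.sum_ite, Finset.sum_const, Finset.sum_const, hc1, hc2,
                smul_eq_mul, smul_eq_mul]
      have hBnat : B = ((q + 2 : ℕ) : ℝ) := by rw [hBdef]; push_cast; ring
      have hAnat : A = ((q + 1 : ℕ) : ℝ) := by rw [hAdef]; push_cast; ring
      obtain ⟨r', hr'⟩ : ∃ r', r = r' + 1 := ⟨r - 1, by omega⟩
      obtain ⟨s, hns, hs1⟩ : ∃ s, n = r' + s ∧ 1 ≤ s := ⟨n - r', by omega, by omega⟩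
      have hr1' : r - 1 = r' := by omega
      have hnr1 : n - (r - 1) = s := by omega
      have mem1 : k ≤ ∑ i, ⌊(1 : ℝ) / a i⌋₊ := by
        rw [hNc, one_mul, one_mul, hBnat, hAnat, Nat.floor_natCast, Nat.floor_natCast,
          hr1', show n - r' = s by omega]
        have : k = q * (r' + s) + (r' + 1) := by rw [hqr, ← hns, ← hr']
        rw [this]
        nlinarith [hs1]
      have lb : ∀ c ∈ {c : ℝ | k ≤ ∑ i, ⌊c / a i⌋₊}, (1 : ℝ) ≤ c := by
        intro c hc
        by_contra hlt
        push_neg at hlt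
        rw [Set.mem_setOf_eq, hNc] at hc
        have hfB : ⌊c * B⌋₊ ≤ q + 1 := by
          have hlt2 : ⌊c * B⌋₊ < q + 2 := by
            rcases le_or_gt 0 c with h0 | h0
            · rw [Nat.floor_lt (by positivity)]
              calc c * B < 1 * B := by exact mul_lt_mul_of_pos_right hlt hB
                _ = ((q + 2 : ℕ) : ℝ) := by rw [one_mul, hBnat]
            · have : c * B < 1 := lt_of_lt_of_le (mul_neg_of_neg_of_pos h0 hB) zero_le_one
              rw [Nat.floor_eq_zero.2 this]; omega
          omega
        have hfA : ⌊c * A⌋₊ ≤ q := by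
          have hlt2 : ⌊c * A⌋₊ < q + 1 := by
            rcases le_or_gt 0 c with h0 | h0
            · rw [Nat.floor_lt (by positivity)]
              calc c * A < 1 * A := by exact mul_lt_mul_of_pos_right hlt hA
                _ = ((q + 1 : ℕ) : ℝ) := by rw [one_mul, hAnat]
            · have : c * A < 1 := lt_of_lt_of_le (mul_neg_of_neg_of_pos h0 hA) zero_le_one
              rw [Nat.floor_eq_zero.2 this]; omega
          omega
        have hub : (r - 1) * ⌊c * B⌋₊ + (n - (r - 1)) * ⌊c * A⌋₊
            ≤ (r - 1) * (q + 1) + (n - (r - 1)) * q :=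
          Nat.add_le_add (Nat.mul_le_mul_left _ hfB) (Nat.mul_le_mul_left _ hfA)
        have hklt : (r - 1) * (q + 1) + (n - (r - 1)) * q < k := by
          rw [hr1', show n - r' = s by omega, hqr, hns, hr']
          nlinarith [hs1]
        omega
      have hck : ckE a k = 1 := by
        rw [ckE_eq a hpos]
        refine le_antisymm (csInf_le ⟨1, lb⟩ mem1) (le_csInf ⟨1, mem1⟩ lb)
      have hprod : ∏ i, a i = (A ^ (n - r + 1) * B ^ (r - 1))⁻¹ := by
        have hnr2 : n - (r - 1) = n - r + 1 := by omega
        calc ∏ i, a i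
            = B⁻¹ ^ (r - 1) * A⁻¹ ^ (n - (r - 1)) := by
              rw [hadef]
              rw [Finset.prod_ite, Finset.prod_const, Finset.prod_const, hc1, hc2]
          _ = (A ^ (n - r + 1) * B ^ (r - 1))⁻¹ := by
              rw [hnr2, inv_pow, inv_pow, ← mul_inv, mul_comm]
      have hP : (∏ i, a i) ^ ((1 : ℝ)/(n : ℝ)) = M⁻¹ := by
        rw [hprod, ← hMpow, ← Real.rpow_natCast M n, ← Real.rpow_neg hM.le,
          ← Real.rpow_mul hM.le]
        rw [show (-(n : ℝ)) * ((1 : ℝ)/(n : ℝ)) = -1 by field_simp]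
        exact Real.rpow_neg_one M
      rw [hck, hP, one_div, inv_inv]
  · -- upper bound
    rintro x ⟨a, hpos, -, rfl⟩
    have hprodpos : 0 < ∏ i, a i := Finset.prod_pos fun i _ => hpos i
    set P : ℝ := (∏ i, a i) ^ ((1 : ℝ)/(n : ℝ)) with hPdef
    have hPpos : 0 < P := Real.rpow_pos_of_pos hprodpos _
    rw [div_le_iff₀ hPpos, ckE_eq a hpos]
    have hPn : P ^ (n : ℕ) = ∏ i, a i := by
      rw [hPdef, ← Real.rpow_natCast ((∏ i, a i) ^ ((1 : ℝ)/(n : ℝ))) n,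
        ← Real.rpow_mul hprodpos.le, one_div, inv_mul_cancel₀ hn0, Real.rpow_one]
    apply csInf_le
    · refine ⟨0, fun c hc => ?_⟩
      by_contra h0
      push_neg at h0
      rw [Set.mem_setOf_eq] at hc
      have hz : ∑ i, ⌊c / a i⌋₊ = 0 := Finset.sum_eq_zero fun i _ =>
        Nat.floor_eq_zero.2 (lt_of_lt_of_le (div_neg_of_neg_of_pos h0 (hpos i)) zero_le_one)
      omega
    · rw [Set.mem_setOf_eq]
      by_contra h
      push_neg at h
      set c : ℝ := M * P with hcdef
      have hc : 0 < c := mul_pos hM hPpos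
      set t : ℝ := B / A with htdef
      have ht0 : 0 < t := div_pos hB hA
      have ht1 : (1 : ℝ) ≤ t := by rw [htdef, le_div_iff₀ hA, one_mul]; exact hAB
      have hne : (Finset.univ : Finset (Fin n)).Nonempty := by
        have : Nonempty (Fin n) := ⟨⟨0, by omega⟩⟩
        exact Finset.univ_nonempty
      have step1 : ∏ i, (c / a i) < ∏ i, ((⌊c / a i⌋₊ : ℝ) + 1) :=
        Finset.prod_lt_prod_of_nonempty (fun i _ => div_pos hc (hpos i))
          (fun i _ => Nat.lt_floor_add_one _) hne
      have step2 : ∏ i, ((⌊c / a i⌋₊ : ℝ) + 1)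
          ≤ ∏ i, (A * t ^ ((⌊c / a i⌋₊ : ℝ) - (q : ℝ))) := by
        refine Finset.prod_le_prod (fun i _ => by positivity) (fun i _ => ?_)
        rw [hAdef, htdef, hBdef]
        exact key_ineq q _
      have step3 : ∏ i, (A * t ^ ((⌊c / a i⌋₊ : ℝ) - (q : ℝ)))
          = A ^ (n : ℕ) * t ^ (∑ i, ((⌊c / a i⌋₊ : ℝ) - (q : ℝ))) := by
        rw [Finset.prod_mul_distrib, Finset.prod_const, prod_rpow_sum t ht0,
          Finset.card_univ, Fintype.card_fin]
      have hsum : ∑ i, ((⌊c / a i⌋₊ : ℝ) - (q : ℝ)) ≤ (r : ℝ) - 1 := by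
        rw [Finset.sum_sub_distrib, Finset.sum_const, Finset.card_univ, Fintype.card_fin,
          nsmul_eq_mul]
        have h1 : (∑ i, ⌊c / a i⌋₊) + 1 ≤ k := h
        have h2 : ((∑ i, ⌊c / a i⌋₊ : ℕ) : ℝ) + 1 ≤ (k : ℝ) := by exact_mod_cast h1
        rw [Nat.cast_sum] at h2
        have hk' : (k : ℝ) = (q : ℝ) * (n : ℝ) + (r : ℝ) := by rw [hqr]; push_cast; ring
        linarith
      have step4 : t ^ (∑ i, ((⌊c / a i⌋₊ : ℝ) - (q : ℝ))) ≤ t ^ ((r : ℝ) - 1) :=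
        Real.rpow_le_rpow_of_exponent_le ht1 hsum
      have step5 : A ^ (n : ℕ) * t ^ ((r : ℝ) - 1) = M ^ (n : ℕ) := by
        have hsplit : A ^ (n : ℕ) = A ^ (n - r + 1) * A ^ (r - 1) := by
          rw [← pow_add]; congr 1; omega
        rw [← e2, Real.rpow_natCast, htdef, div_pow, hMpow, hsplit]
        field_simp
      have hAn : 0 < A ^ (n : ℕ) := pow_pos hA _
      have hfinal : ∏ i, (c / a i) < M ^ (n : ℕ) := by
        calc ∏ i, (c / a i) < ∏ i, ((⌊c / a i⌋₊ : ℝ) + 1) := step1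
          _ ≤ ∏ i, (A * t ^ ((⌊c / a i⌋₊ : ℝ) - (q : ℝ))) := step2
          _ = A ^ (n : ℕ) * t ^ (∑ i, ((⌊c / a i⌋₊ : ℝ) - (q : ℝ))) := step3
          _ ≤ A ^ (n : ℕ) * t ^ ((r : ℝ) - 1) :=
              mul_le_mul_of_nonneg_left step4 hAn.le
          _ = M ^ (n : ℕ) := step5
      have hprodc : ∏ i, (c / a i) = c ^ (n : ℕ) / ∏ i, a i := by
        rw [Finset.prod_div_distrib, Finset.prod_const, Finset.card_univ, Fintype.card_fin]
      rw [hprodc, hcdef, mul_pow, hPn, mul_div_assoc,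
        div_self hprodpos.ne', mul_one] at hfinal
      exact lt_irrefl _ hfinal
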